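/- Let (R, m) be a Noetherian local ring of dimension d and 1 ≤ s ≤ d−1. Define b_s(R) = ⋂_x Ann((Q_s : x_{s+1})/Q_s), c_s(R) = ⋂_{x,n} Ann((Q_s^n : x_{s+1})/Q_s^n), and d_s(R) = ⋂_{x,n} Ann((⋂_{α∈Λ_{s,n}} Q_s(α))/Q_s^n), all intersections over systems of parameters x = x_1,…,x_d of R (and n ≥ 1), where Q_s = (x_1,…,x_s). Then b_s(R)·d_s(R) ⊆ c_s(R). -/

import Mathlib

/-- `x` is a system of parameters of the local ring `R`. -/
def IsSOP (R : Type*) [CommRing R] [IsLocalRing R] {d : ℕ} (x : Fin d → R) : Prop :=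
  (∀ i, x i ∈ IsLocalRing.maximalIdeal R) ∧
    (Ideal.span (Set.range x)).radical = IsLocalRing.maximalIdeal R

/-- `Q_s = (x_1, …, x_s)`. -/
def Qup {R : Type*} [CommRing R] {d : ℕ} (x : Fin d → R) (s : ℕ) : Ideal R :=
  Ideal.span (x '' {i | (i : ℕ) < s})

/-- `α ∈ Λ_{s,n}`: the first `s` entries are positive and sum to `s + n - 1`. -/
def IsLam {d : ℕ} (s n : ℕ) (α : Fin d → ℕ) : Prop :=
  (∀ i : Fin d, (i : ℕ) < s → 1 ≤ α i) ∧
    (∑ i ∈ Finset.univ.filter (fun i : Fin d => (i : ℕ) < s), α i) = s + n - 1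

/-- `Q_s(α) = (x_1^{α_1}, …, x_s^{α_s})`. -/
def PQ {R : Type*} [CommRing R] {d : ℕ} (x : Fin d → R) (s : ℕ) (α : Fin d → ℕ) : Ideal R :=
  Ideal.span ((fun i => x i ^ α i) '' {i | (i : ℕ) < s})

/-- `b_s(R)`. -/
noncomputable def bs (R : Type*) [CommRing R] [IsLocalRing R] {d : ℕ} (s : Fin d) : Ideal R :=
  ⨅ (x : Fin d → R) (_ : IsSOP R x),
    Submodule.colon (Qup x (s : ℕ))
      (Submodule.colon (Qup x (s : ℕ)) (Ideal.span {x s}))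

/-- `c_s(R)`. -/
noncomputable def cs (R : Type*) [CommRing R] [IsLocalRing R] {d : ℕ} (s : Fin d) : Ideal R :=
  ⨅ (x : Fin d → R) (_ : IsSOP R x) (n : ℕ) (_ : 1 ≤ n),
    Submodule.colon (Qup x (s : ℕ) ^ n)
      (Submodule.colon (Qup x (s : ℕ) ^ n) (Ideal.span {x s}))

/-- `d_s(R)`. -/
noncomputable def ds (R : Type*) [CommRing R] [IsLocalRing R] (d s : ℕ) : Ideal R :=
  ⨅ (x : Fin d → R) (_ : IsSOP R x) (n : ℕ) (_ : 1 ≤ n),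
    Submodule.colon (Qup x s ^ n) (⨅ (α : Fin d → ℕ) (_ : IsLam s n α), PQ x s α)

lemma card_le_filter_lt {d s : ℕ} (hsd : s ≤ d) :
    s ≤ (Finset.univ.filter (fun i : Fin d => (i : ℕ) < s)).card := by
  have hsub : (Finset.univ : Finset (Fin s)).image (Fin.castLE hsd) ⊆
      Finset.univ.filter (fun i : Fin d => (i : ℕ) < s) := by
    intro i hi
    simp only [Finset.mem_image] at hi
    obtain ⟨j, -, rfl⟩ := hi
    simp [j.isLt]
  have h2 := Finset.card_le_card hsub
  rwa [Finset.card_image_of_injective _ (Fin.castLE_injective hsd), Finset.card_univ,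
    Fintype.card_fin] at h2

lemma pow_le_PQ {R : Type*} [CommRing R] {d : ℕ} (x : Fin d → R) {s : ℕ} (hsd : s ≤ d) :
    ∀ n, 1 ≤ n → ∀ α : Fin d → ℕ, (∀ i : Fin d, (i : ℕ) < s → 1 ≤ α i) →
    (∑ i ∈ Finset.univ.filter (fun i : Fin d => (i : ℕ) < s), α i) = s + n - 1 →
    Qup x s ^ n ≤ PQ x s α := by
  intro n
  induction n with
  | zero => omega
  | succ n ih =>
    intro _ α hα hsum
    by_cases hn : n = 0
    · subst hn
      rw [pow_one, Qup, Ideal.span_le]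
      rintro y ⟨i, hi, rfl⟩
      have hi' : (i : ℕ) < s := hi
      have hone : α i = 1 := by
        by_contra h
        have h2 : 2 ≤ α i := by have := hα i hi'; omega
        have hmem : i ∈ Finset.univ.filter (fun k : Fin d => (k : ℕ) < s) := by simp [hi']
        have hle : ∑ k ∈ Finset.univ.filter (fun k : Fin d => (k : ℕ) < s),
            ((if k = i then 1 else 0) + 1) ≤
            ∑ k ∈ Finset.univ.filter (fun k : Fin d => (k : ℕ) < s), α k := by
          apply Finset.sum_le_sum
          intro k hk
          simp only [Finset.mem_filter] at hk
          by_cases hki : k = i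
          · subst hki; simpa using h2
          · simp [hki, hα k hk.2]
        rw [Finset.sum_add_distrib, Finset.sum_ite_eq' _ i (fun _ => 1), if_pos hmem,
          Finset.sum_const, smul_eq_mul, mul_one] at hle
        have hcard := card_le_filter_lt (d := d) (s := s) hsd
        omega
      exact Ideal.subset_span ⟨i, hi', by simp [hone]⟩
    · have hn1 : 1 ≤ n := by omega
      rw [pow_succ, Ideal.mul_le]
      intro t ht r hr
      induction hr using Submodule.span_induction with
      | mem y hy =>
        obtain ⟨j, hj, rfl⟩ := hy
        have hj' : (j : ℕ) < s := hj
        by_cases hαj : α j = 1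
        · exact Ideal.mul_mem_left _ t (Ideal.subset_span ⟨j, hj', by simp [hαj]⟩)
        · have hαj2 : 2 ≤ α j := by have := hα j hj'; omega
          set α' : Fin d → ℕ := Function.update α j (α j - 1) with hα'
          have hjm : j ∈ Finset.univ.filter (fun k : Fin d => (k : ℕ) < s) := by simp [hj']
          have hsum' : (∑ i ∈ Finset.univ.filter (fun i : Fin d => (i : ℕ) < s), α' i)
              = s + n - 1 := by
            rw [hα', Finset.sum_update_of_mem hjm]
            have h3 := Finset.add_sum_erase _ α hjm
            rw [Finset.sdiff_singleton_eq_erase]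
            omega
          have hα'pos : ∀ i : Fin d, (i : ℕ) < s → 1 ≤ α' i := by
            intro i hi
            by_cases hij : i = j
            · subst hij; rw [hα', Function.update_self]; omega
            · rw [hα', Function.update_of_ne hij]; exact hα i hi
          have ht' : t ∈ PQ x s α' := ih hn1 α' hα'pos hsum' ht
          clear ht
          induction ht' using Submodule.span_induction with
          | mem u hu =>
            obtain ⟨i, hi, rfl⟩ := hu
            have hi' : (i : ℕ) < s := hi
            show x i ^ α' i * x j ∈ PQ x s α
            by_cases hij : i = j
            · subst hij
              have he : x i ^ α' i * x i = x i ^ α i := by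
                rw [hα', Function.update_self, ← pow_succ]
                congr 1; omega
              rw [he]
              exact Ideal.subset_span ⟨i, hi', rfl⟩
            · apply Ideal.mul_mem_right
              have hne : α' i = α i := by rw [hα', Function.update_of_ne hij]
              exact Ideal.subset_span ⟨i, hi', by simp [hne]⟩
          | zero => simp
          | add u v _ _ hu hv => rw [add_mul]; exact Ideal.add_mem _ hu hv
          | smul c u _ hu => rw [smul_mul_assoc]; exact Submodule.smul_mem _ c hu
      | zero => simp
      | add u v _ _ hu hv => rw [mul_add]; exact Ideal.add_mem _ hu hv
      | smul c u _ hu => rw [mul_smul_comm]; exact Submodule.smul_mem _ c hu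

lemma isSOP_pow {R : Type*} [CommRing R] [IsLocalRing R] {d : ℕ} {x : Fin d → R}
    (hx : IsSOP R x) {s : ℕ} {α : Fin d → ℕ} (hα : ∀ i : Fin d, (i : ℕ) < s → 1 ≤ α i) :
    IsSOP R (fun i => if (i : ℕ) < s then x i ^ α i else x i) := by
  set x' : Fin d → R := fun i => if (i : ℕ) < s then x i ^ α i else x i with hx'
  constructor
  · intro i
    by_cases hi : (i : ℕ) < s
    · simp only [hx', if_pos hi]
      exact Ideal.pow_mem_of_mem _ (hx.1 i) _ (hα i hi)
    · simp only [hx', if_neg hi]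
      exact hx.1 i
  · apply le_antisymm
    · have h1 : Ideal.span (Set.range x') ≤ (Ideal.span (Set.range x)).radical := by
        rw [Ideal.span_le]
        rintro y ⟨i, rfl⟩
        simp only [SetLike.mem_coe]
        by_cases hi : (i : ℕ) < s
        · simp only [hx', if_pos hi]
          exact Ideal.le_radical
            (Ideal.pow_mem_of_mem _ (Ideal.subset_span (Set.mem_range_self i)) _ (hα i hi))
        · simp only [hx', if_neg hi]
          exact Ideal.le_radical (Ideal.subset_span (Set.mem_range_self i))
      calc (Ideal.span (Set.range x')).radical
          ≤ (Ideal.span (Set.range x)).radical.radical := Ideal.radical_mono h1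
        _ = (Ideal.span (Set.range x)).radical := Ideal.radical_idem _
        _ = IsLocalRing.maximalIdeal R := hx.2
    · have h1 : Ideal.span (Set.range x) ≤ (Ideal.span (Set.range x')).radical := by
        rw [Ideal.span_le]
        rintro y ⟨i, rfl⟩
        simp only [SetLike.mem_coe]
        by_cases hi : (i : ℕ) < s
        · rw [Ideal.mem_radical_iff]
          exact ⟨α i, Ideal.subset_span ⟨i, by simp [hx', if_pos hi]⟩⟩
        · exact Ideal.le_radical (Ideal.subset_span ⟨i, by simp [hx', if_neg hi]⟩)
      calc IsLocalRing.maximalIdeal R = (Ideal.span (Set.range x)).radical := hx.2.symm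
        _ ≤ (Ideal.span (Set.range x')).radical.radical := Ideal.radical_mono h1
        _ = (Ideal.span (Set.range x')).radical := Ideal.radical_idem _

theorem stmt6 {R : Type*} [CommRing R] [IsLocalRing R] [IsNoetherianRing R] {d : ℕ}
    (hd : ringKrullDim R = d) (s : Fin d) (hs : 1 ≤ (s : ℕ)) (hsd : (s : ℕ) ≤ d - 1) :
    bs R s * ds R d (s : ℕ) ≤ cs R s := by
  rw [cs]
  refine le_iInf fun x => le_iInf fun hx => le_iInf fun n => le_iInf fun hn => ?_
  rw [Ideal.mul_le]
  intro a ha b hb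
  rw [Submodule.mem_colon]
  intro r hr
  -- `r ∈ (Q^n : x_s)`
  have key : a * r ∈ ⨅ (α : Fin d → ℕ) (_ : IsLam (s : ℕ) n α), PQ x (s : ℕ) α := by
    rw [Submodule.mem_iInf]
    intro α
    rw [Submodule.mem_iInf]
    intro hα
    set x' : Fin d → R := fun i => if (i : ℕ) < (s : ℕ) then x i ^ α i else x i with hx'd
    have hx' : IsSOP R x' := isSOP_pow hx hα.1
    have hQ : Qup x' (s : ℕ) = PQ x (s : ℕ) α := by
      unfold Qup PQ
      congr 1
      apply Set.image_congr
      intro i hi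
      simp only [Set.mem_setOf_eq] at hi
      exact if_pos hi
    have hxs : x' s = x s := if_neg (lt_irrefl _)
    have hpow : Qup x (s : ℕ) ^ n ≤ PQ x (s : ℕ) α :=
      pow_le_PQ x (le_of_lt s.isLt) n hn α hα.1 hα.2
    have ha' : a ∈ Submodule.colon (PQ x (s : ℕ) α)
        (Submodule.colon (PQ x (s : ℕ) α) (Ideal.span {x s})) := by
      have := (Submodule.mem_iInf _).mp ((Submodule.mem_iInf _).mp ha x') hx'
      rwa [hQ, hxs] at this
    have hr' : r ∈ Submodule.colon (PQ x (s : ℕ) α) (Ideal.span {x s}) :=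
      Submodule.colon_mono hpow le_rfl hr
    have := Submodule.mem_colon.mp ha' r hr'
    rwa [smul_eq_mul] at this
  have hb' : b ∈ Submodule.colon (Qup x (s : ℕ) ^ n)
      (⨅ (α : Fin d → ℕ) (_ : IsLam (s : ℕ) n α), PQ x (s : ℕ) α) := by
    have := (Submodule.mem_iInf _).mp ((Submodule.mem_iInf _).mp hb x) hx
    exact (Submodule.mem_iInf _).mp ((Submodule.mem_iInf _).mp this n) hn
  have hfin := Submodule.mem_colon.mp hb' _ (by simpa using key)
  rw [smul_eq_mul] at hfin
  rw [smul_eq_mul]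
  have heq : a * b * r = b * (a * r) := by ring
  rw [heq]
  exact hfin
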